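/- Let Z be a real Banach space and X ⊆ Z* a norm-closed subspace which is norming for Z. If a subset S ⊆ Z is relatively convex block compact in (Z,σ(Z,X)), then S is norm-bounded. -/

import Mathlib

open MeasureTheory Filter Set Topology
open scoped UniformConvergence

noncomputable section

/-- The topology `σ(Z,X)` on `Z` of pointwise convergence on a subspace `X ⊆ Z*`. -/
def sigmaTop {Z : Type*} [NormedAddCommGroup Z] [NormedSpace ℝ Z]
    (X : Submodule ℝ (Z →L[ℝ] ℝ)) : TopologicalSpace Z :=
  TopologicalSpace.induced (fun z => fun x : X => (x : Z →L[ℝ] ℝ) z) Pi.topologicalSpace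

/-- The weak* topology on the dual of `E`: pointwise convergence on `E`. -/
def wstarTop (E : Type*) [NormedAddCommGroup E] [NormedSpace ℝ E] :
    TopologicalSpace (E →L[ℝ] ℝ) :=
  TopologicalSpace.induced (fun f => (f : E → ℝ)) Pi.topologicalSpace

/-- A norm-closed subspace `X ⊆ Z*` is norming for `Z` if
`|||z||| = sup {⟨x,z⟩ : x ∈ B_X}` is an equivalent norm on `Z`; since this sup is always
`≤ ‖z‖`, this amounts to the existence of `c > 0` with `c⬝‖z‖ ≤ |||z|||` for all `z`. -/
def IsNorming {Z : Type*} [NormedAddCommGroup Z] [NormedSpace ℝ Z]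
    (X : Submodule ℝ (Z →L[ℝ] ℝ)) : Prop :=
  ∃ c > (0 : ℝ), ∀ z : Z, c * ‖z‖ ≤ sSup {r : ℝ | ∃ x ∈ X, ‖x‖ ≤ 1 ∧ r = x z}

/-- The average range `𝒜_ν(A) = {ν(B)/μ(B) : B ∈ Σ, B ⊆ A, μ(B) > 0}`. -/
def avgRange {Ω : Type*} [MeasurableSpace Ω] {Z : Type*} [NormedAddCommGroup Z]
    [NormedSpace ℝ Z] (μ : Measure Ω) (ν : VectorMeasure Ω (Z →L[ℝ] ℝ)) (A : Set Ω) :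
    Set (Z →L[ℝ] ℝ) :=
  {w | ∃ B : Set Ω, MeasurableSet B ∧ B ⊆ A ∧ 0 < μ B ∧ w = (μ B).toReal⁻¹ • ν B}

/-- Condition (G): for every `A ∈ Σ` with `μ(A) > 0`, the `w*`-closed convex hull of the
average range `𝒜_ν(A)` intersects `X`. -/
def CondG {Ω : Type*} [MeasurableSpace Ω] {Z : Type*} [NormedAddCommGroup Z]
    [NormedSpace ℝ Z] (μ : Measure Ω) (ν : VectorMeasure Ω (Z →L[ℝ] ℝ))
    (X : Submodule ℝ (Z →L[ℝ] ℝ)) : Prop :=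
  ∀ A : Set Ω, MeasurableSet A → 0 < μ A →
    (@closure _ (wstarTop Z) (convexHull ℝ (avgRange μ ν A)) ∩
      (X : Set (Z →L[ℝ] ℝ))).Nonempty

/-- `h` is a convex block subsequence of `g`: `h k = ∑_{n ∈ I k} a n • g n` where the finite
sets `I k` satisfy `max (I k) < min (I (k+1))` and the `a n` are non-negative reals summing
to `1` over each `I k`. -/
def ConvexBlock {E : Type*} [AddCommMonoid E] [Module ℝ E] (g h : ℕ → E) : Prop :=
  ∃ (I : ℕ → Finset ℕ) (a : ℕ → ℝ),
    (∀ k, ∀ n ∈ I k, ∀ m ∈ I (k + 1), n < m) ∧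
    (∀ n, 0 ≤ a n) ∧ (∀ k, ∑ n ∈ I k, a n = 1) ∧
    (∀ k, h k = ∑ n ∈ I k, a n • g n)

/-- `(B_{X*}, w*)` is convex block compact: every sequence in the closed unit ball of `X*`
admits a convex block subsequence which is `w*`-convergent. -/
def DualBallConvexBlockCompact (X : Type*) [NormedAddCommGroup X] [NormedSpace ℝ X] : Prop :=
  ∀ g : ℕ → (X →L[ℝ] ℝ), (∀ n, ‖g n‖ ≤ 1) →
    ∃ h : ℕ → (X →L[ℝ] ℝ), ConvexBlock g h ∧
      ∃ f : X →L[ℝ] ℝ, Tendsto h atTop (@nhds _ (wstarTop X) f)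

/-- A relatively convex block compact subset of `(Z, σ(Z,X))` is norm-bounded. -/
theorem normBounded_of_relativelyConvexBlockCompact
    {Z : Type*} [NormedAddCommGroup Z] [NormedSpace ℝ Z] [CompleteSpace Z]
    (X : Submodule ℝ (Z →L[ℝ] ℝ)) (hXclosed : IsClosed (X : Set (Z →L[ℝ] ℝ)))
    (hXnorming : IsNorming X)
    (S : Set Z)
    (hS : ∀ z : ℕ → Z, (∀ n, z n ∈ S) →
      ∃ w : ℕ → Z, ConvexBlock z w ∧
        ∃ w₀ : Z, Tendsto w atTop (@nhds _ (sigmaTop X) w₀)) :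
    ∃ M : ℝ, ∀ z ∈ S, ‖z‖ ≤ M := by
  obtain ⟨c, hc, hnorm⟩ := hXnorming
  by_cases hbdd : ∀ x : X, ∃ C : ℝ, ∀ s : S, ‖(x : Z →L[ℝ] ℝ) (s : Z)‖ ≤ C
  · -- pointwise bounded on X ⇒ norm bounded via Banach–Steinhaus and norming
    haveI : CompleteSpace X := hXclosed.completeSpace_coe
    -- the family of evaluation functionals on X indexed by S
    set g : S → (X →L[ℝ] ℝ) :=
      fun s => (ContinuousLinearMap.apply ℝ ℝ (s : Z)).comp X.subtypeL with hg
    have hpt : ∀ x : X, ∃ C : ℝ, ∀ s : S, ‖g s x‖ ≤ C := by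
      intro x
      obtain ⟨C, hC⟩ := hbdd x
      exact ⟨C, fun s => hC s⟩
    letI : Norm (X →L[ℝ] ℝ) := @ContinuousLinearMap.hasOpNorm ℝ ℝ X ℝ _ _ _ _ _ _ (RingHom.id ℝ)
    obtain ⟨C', hC'⟩ := banach_steinhaus (E := X) (F := ℝ) (𝕜 := ℝ) (𝕜₂ := ℝ) (σ₁₂ := RingHom.id ℝ) (g := g) hpt
    refine ⟨max C' 0 / c, fun z hz => ?_⟩
    have hsup : sSup {r : ℝ | ∃ x ∈ X, ‖x‖ ≤ 1 ∧ r = x z} ≤ max C' 0 := by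
      refine Real.sSup_le ?_ (le_max_right _ _)
      rintro r ⟨x, hxX, hx1, rfl⟩
      have h1 : ‖g ⟨z, hz⟩ ⟨x, hxX⟩‖ ≤ ‖g ⟨z, hz⟩‖ * ‖(⟨x, hxX⟩ : X)‖ :=
        ContinuousLinearMap.le_opNorm (E := X) (F := ℝ) (𝕜 := ℝ) (𝕜₂ := ℝ) (σ₁₂ := RingHom.id ℝ) (g ⟨z, hz⟩) _
      have h2 : ‖(⟨x, hxX⟩ : X)‖ = ‖x‖ := rfl
      have h3 : g ⟨z, hz⟩ ⟨x, hxX⟩ = x z := rfl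
      have h4 : ‖g ⟨z, hz⟩‖ * ‖x‖ ≤ C' * 1 := by
        apply mul_le_mul (hC' ⟨z, hz⟩) hx1 (norm_nonneg _)
        exact le_trans (norm_nonneg _) (hC' ⟨z, hz⟩)
      have : x z ≤ ‖x z‖ := le_abs_self _
      rw [← h3, h2] at *
      calc g ⟨z, hz⟩ ⟨x, hxX⟩ ≤ ‖g ⟨z, hz⟩ ⟨x, hxX⟩‖ := le_abs_self _
        _ ≤ C' * 1 := le_trans h1 h4
        _ ≤ max C' 0 := by simp [le_max_left]
    have := le_trans (hnorm z) hsup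
    rw [← le_div_iff₀' hc] at this
    exact this
  · -- some x ∈ X is unbounded on S
    exfalso
    push_neg at hbdd
    obtain ⟨x, hx⟩ := hbdd
    -- get y ∈ X unbounded above on S
    have hy : ∃ y ∈ X, ∀ C : ℝ, ∃ s ∈ S, C < y s := by
      by_contra hcon
      push_neg at hcon
      obtain ⟨C₁, hC₁⟩ := hcon (x : Z →L[ℝ] ℝ) x.2
      obtain ⟨C₂, hC₂⟩ := hcon (-(x : Z →L[ℝ] ℝ)) (neg_mem x.2)
      obtain ⟨s, hs⟩ := hx (max C₁ C₂)
      have h1 : (x : Z →L[ℝ] ℝ) s ≤ max C₁ C₂ := le_trans (hC₁ s s.2) (le_max_left _ _)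
      have h2 : -((x : Z →L[ℝ] ℝ) s) ≤ max C₁ C₂ := by
        have := hC₂ s s.2
        simpa using le_trans this (le_max_right _ _)
      have : ‖(x : Z →L[ℝ] ℝ) s‖ ≤ max C₁ C₂ := abs_le.2 ⟨by linarith, h1⟩
      exact absurd hs (not_lt.2 this)
    obtain ⟨y, hyX, hyU⟩ := hy
    -- choose t n ∈ S with y (t n) > n
    choose t htS hty using fun n : ℕ => hyU (n : ℝ)
    obtain ⟨w, ⟨I, a, hinc, ha0, hsum, hw⟩, w₀, hconv⟩ := hS t htS
    -- blocks are nonempty and spread out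
    have hIne : ∀ k, (I k).Nonempty := by
      intro k
      rcases Finset.eq_empty_or_nonempty (I k) with h | h
      · exfalso; have := hsum k; rw [h] at this; simp at this
      · exact h
    have hge : ∀ k, ∀ n ∈ I k, k ≤ n := by
      intro k
      induction k with
      | zero => intro n _; exact Nat.zero_le n
      | succ k ih =>
        intro n hn
        obtain ⟨m, hm⟩ := hIne k
        exact Nat.succ_le_of_lt (lt_of_le_of_lt (ih m hm) (hinc k m hm n hn))
    -- y (w k) ≥ k
    have hlb : ∀ k : ℕ, (k : ℝ) ≤ y (w k) := by
      intro k
      have hywk : y (w k) = ∑ n ∈ I k, a n * y (t n) := by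
        rw [hw k, map_sum]
        exact Finset.sum_congr rfl fun n _ => y.map_smul (a n) (t n)
      rw [hywk]
      calc (k : ℝ) = ∑ n ∈ I k, a n * k := by
            rw [← Finset.sum_mul, hsum k, one_mul]
        _ ≤ ∑ n ∈ I k, a n * y (t n) := by
            refine Finset.sum_le_sum fun n hn => ?_
            refine mul_le_mul_of_nonneg_left ?_ (ha0 n)
            have h1 : (k : ℝ) ≤ (n : ℝ) := Nat.cast_le.2 (hge k n hn)
            exact le_of_lt (lt_of_le_of_lt h1 (hty n))
      
    have hdiv : Tendsto (fun k => y (w k)) atTop atTop :=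
      tendsto_atTop_mono hlb tendsto_natCast_atTop_atTop
    -- but σ(Z,X)-convergence gives convergence of y ∘ w
    have hconv' : Tendsto (fun k => y (w k)) atTop (nhds (y w₀)) := by
      rw [sigmaTop, nhds_induced, tendsto_comap_iff] at hconv
      have := tendsto_pi_nhds.1 hconv ⟨y, hyX⟩
      exact this
    exact not_tendsto_nhds_of_tendsto_atTop hdiv _ hconv'
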